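/- Let d ≥ 1 and let p : X → ℝ^d be a map on a set X of d+2 elements such that the d·(d+2) coordinates of the points p(i), i ∈ X, are algebraically independent over ℚ. Then there exist reals a_i, i ∈ X, not all zero, with ∑_{i∈X} a_i p(i) = 0 and ∑_{i∈X} a_i = 0; this affine dependence is unique up to a scalar multiple; and every coefficient a_i is nonzero. -/

import Mathlib

open scoped BigOperators

noncomputable section

variable {V : Type*}

/-- A framework `p : V → ℝ^d` is generic if the `d·|V|` coordinates of the points `p v`
are algebraically independent over `ℚ`. -/
def IsGenericFramework [Fintype V] {d : ℕ} (p : V → EuclideanSpace ℝ (Fin d)) : Prop :=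
  AlgebraicIndependent ℚ (fun vi : V × Fin d => p vi.1 vi.2)

/-- A framework is globally rigid if every framework with the same edge lengths arises
from it by an isometry of `ℝ^d`. -/
def IsGloballyRigid [Fintype V] {d : ℕ} (G : SimpleGraph V)
    (p : V → EuclideanSpace ℝ (Fin d)) : Prop :=
  ∀ q : V → EuclideanSpace ℝ (Fin d),
    (∀ u v, G.Adj u v → dist (q u) (q v) = dist (p u) (p v)) →
    ∃ T : EuclideanSpace ℝ (Fin d) ≃ᵢ EuclideanSpace ℝ (Fin d), ∀ v, q v = T (p v)

/-- A graph is generically globally rigid in `ℝ^d` if every generic framework is globally rigid. -/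
def IsGenericallyGloballyRigid [Fintype V] (d : ℕ) (G : SimpleGraph V) : Prop :=
  ∀ p : V → EuclideanSpace ℝ (Fin d), IsGenericFramework p → IsGloballyRigid G p

/-- Edge-minimal generically globally rigid. -/
def IsMinimallyGenericallyGloballyRigid [Fintype V] (d : ℕ) (G : SimpleGraph V) : Prop :=
  IsGenericallyGloballyRigid d G ∧
    ∀ e ∈ G.edgeSet, ¬ IsGenericallyGloballyRigid d (G.deleteEdges {e})

/-- Equilibrium stress matrix of the framework `(G, p)`. -/
def IsStressMatrix [Fintype V] {d : ℕ} (G : SimpleGraph V)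
    (p : V → EuclideanSpace ℝ (Fin d)) (Ω : Matrix V V ℝ) : Prop :=
  Ω.IsSymm ∧ (∀ u v : V, u ≠ v → ¬ G.Adj u v → Ω u v = 0) ∧
    (∀ u : V, ∑ v : V, Ω u v = 0) ∧
    (∀ u : V, ∑ v : V, Ω u v • p v = 0)

/-- The row of the rigidity matrix corresponding to an edge, as a block vector with one
`ℝ^d` block per vertex: the block of `u` is `p u - p w`, the block of `w` is `p w - p u`,
and all other blocks vanish. -/
def rigidityRow [DecidableEq V] {d : ℕ} (p : V → EuclideanSpace ℝ (Fin d)) :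
    Sym2 V → (V → EuclideanSpace ℝ (Fin d)) :=
  Sym2.lift ⟨fun u w v => if v = u then p u - p w else if v = w then p w - p u else 0, by
    intro u w
    rcases eq_or_ne u w with rfl | huw
    · rfl
    funext v
    by_cases hu : v = u <;> by_cases hw : v = w
    · exact absurd (hu.symm.trans hw) huw
    · simp [hu, hw, huw, huw.symm]
    · simp [hu, hw, huw, huw.symm]
    · simp [hu, hw]⟩

/-- The rows of the rigidity matrix of `(G,p)` indexed by `C` are linearly independent. -/
def RowsLinIndep [DecidableEq V] {d : ℕ} (p : V → EuclideanSpace ℝ (Fin d))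
    (C : Set (Sym2 V)) : Prop :=
  LinearIndependent ℝ (fun e : C => rigidityRow p (e : Sym2 V))

/-- `C` is an `R_d`-circuit of `G`. -/
def IsRdCircuit [Fintype V] [DecidableEq V] (d : ℕ) (G : SimpleGraph V)
    (C : Set (Sym2 V)) : Prop :=
  C ⊆ G.edgeSet ∧
    ∀ p : V → EuclideanSpace ℝ (Fin d), IsGenericFramework p →
      ¬ RowsLinIndep p C ∧ ∀ C' ⊂ C, RowsLinIndep p C'

/-- The symmetric matrix associated with coefficients `ω` supported on a set `C` of edges:
off-diagonal entries are `ω s(u,v)` for `s(u,v) ∈ C` and `0` otherwise, and the diagonal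
entries make all row sums vanish. -/
def stressOfCoeffs [Fintype V] [DecidableEq V] (C : Finset (Sym2 V)) (ω : Sym2 V → ℝ) :
    Matrix V V ℝ :=
  Matrix.of fun u v =>
    if u = v then -∑ w ∈ Finset.univ.erase u, (if s(u, w) ∈ C then ω s(u, w) else 0)
    else if s(u, v) ∈ C then ω s(u, v) else 0


noncomputable def M0 (d : ℕ) : Matrix (Fin (d+1)) (Fin (d+1)) ℚ :=
  fun i j => if h : (j:ℕ) < d then (if i = Fin.succ ⟨j, h⟩ then 1 else 0) else 1

lemma det_M0 (d : ℕ) : (M0 d).det = (-1)^d := by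
  rw [Matrix.det_succ_row_zero]
  rw [Finset.sum_eq_single (Fin.last d)]
  · have h0 : M0 d 0 (Fin.last d) = 1 := by simp [M0]
    have hsub : (M0 d).submatrix Fin.succ (Fin.last d).succAbove = 1 := by
      funext i j
      simp only [Matrix.submatrix_apply, Fin.succAbove_last, M0]
      have hj : ((Fin.castSucc j : Fin (d+1)) : ℕ) < d := j.isLt
      rw [dif_pos hj]
      have : (⟨(Fin.castSucc j : Fin (d+1)) , hj⟩ : Fin d) = j := by
        simp [Fin.ext_iff]
      rw [this]
      by_cases hij : i = j
      · simp [hij, Matrix.one_apply]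
      · simp [hij, Matrix.one_apply, Fin.succ_inj, fun h => hij h]
    rw [h0, hsub, Matrix.det_one]
    simp [Fin.val_last]
  · intro j _ hj
    have : M0 d 0 j = 0 := by
      have hjd : (j:ℕ) < d := by
        rcases lt_or_eq_of_le (Nat.lt_succ_iff.mp j.isLt) with h | h
        · exact h
        · exact absurd (Fin.ext h : j = Fin.last d) hj
      show (if h : (j:ℕ) < d then (if (0:Fin (d+1)) = Fin.succ ⟨j, h⟩ then (1:ℚ) else 0) else 1) = 0
      rw [dif_pos hjd, if_neg (Fin.succ_ne_zero _).symm]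
    simp [this]
  · simp

noncomputable def affMat {X : Type*} {d : ℕ} (p : X → EuclideanSpace ℝ (Fin d))
    (f : Fin (d+1) → X) : Matrix (Fin (d+1)) (Fin (d+1)) ℝ :=
  fun i j => if h : (j:ℕ) < d then p (f i) ⟨j, h⟩ else 1

lemma det_affMat_ne_zero {X : Type*} {d : ℕ} (p : X → EuclideanSpace ℝ (Fin d))
    (hp : AlgebraicIndependent ℚ (fun xi : X × Fin d => p xi.1 xi.2))
    (f : Fin (d+1) → X) (hf : Function.Injective f) :
    (affMat p f).det ≠ 0 := by
  classical
  set φ : MvPolynomial (X × Fin d) ℚ →+* ℝ :=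
    (MvPolynomial.aeval (fun xi : X × Fin d => p xi.1 xi.2)).toRingHom with hφ
  set N : Matrix (Fin (d+1)) (Fin (d+1)) (MvPolynomial (X × Fin d) ℚ) :=
    fun i j => if h : (j:ℕ) < d then MvPolynomial.X (f i, ⟨j, h⟩) else 1 with hN
  have hmap : affMat p f = N.map φ := by
    funext i j
    show affMat p f i j = φ (N i j)
    by_cases h : (j:ℕ) < d <;> simp [affMat, hN, h, Matrix.map_apply, hφ]
  have hdet : (affMat p f).det = φ N.det := by
    rw [hmap, ← RingHom.mapMatrix_apply, ← RingHom.map_det]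
  rw [hdet]
  intro h0
  have hNdet : N.det = 0 := by
    have hinj : Function.Injective φ := hp
    exact hinj (by simpa using h0)
  -- evaluate at a rational point
  set w : X × Fin d → ℚ := fun xj => if xj.1 = f (Fin.succ xj.2) then 1 else 0 with hw
  have := congrArg (MvPolynomial.eval w) hNdet
  rw [RingHom.map_det, RingHom.mapMatrix_apply] at this
  have hM0 : N.map (MvPolynomial.eval w) = M0 d := by
    funext i j
    show MvPolynomial.eval w (N i j) = M0 d i j
    by_cases h : (j:ℕ) < d
    · simp only [hN, Matrix.map_apply, dif_pos h, MvPolynomial.eval_X, hw, M0, hf.eq_iff]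
    · simp [hN, Matrix.map_apply, dif_neg h, M0]
  rw [hM0, det_M0] at this
  simp at this


lemma eucl_sum_apply {ι : Type*} (s : Finset ι) {d : ℕ}
    (g : ι → EuclideanSpace ℝ (Fin d)) (j : Fin d) :
    (∑ i ∈ s, g i) j = ∑ i ∈ s, g i j := by
  rw [WithLp.ofLp_sum, Finset.sum_apply]

lemma vanish_aux {X : Type*} [Fintype X] {d : ℕ}
    (hX : Fintype.card X = d + 2) (p : X → EuclideanSpace ℝ (Fin d))
    (hp : AlgebraicIndependent ℚ (fun xi : X × Fin d => p xi.1 xi.2))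
    (i₀ : X) (b : X → ℝ) (h1 : ∑ i, b i • p i = 0) (h2 : ∑ i, b i = 0)
    (h0 : b i₀ = 0) : b = 0 := by
  classical
  have hcard : Fintype.card {i : X // i ≠ i₀} = d + 1 := by
    have := Fintype.card_subtype_compl (fun i : X => i = i₀)
    simp only [Fintype.card_subtype_eq] at this
    rw [hX] at this
    simpa using this
  set g : Fin (d+1) ≃ {i : X // i ≠ i₀} := (Fintype.equivFinOfCardEq hcard).symm with hg
  set f : Fin (d+1) → X := fun i => (g i : X) with hfdef
  have hf : Function.Injective f := fun i j h => g.injective (Subtype.ext h)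
  -- the general reindexing fact
  have key : ∀ F : X → ℝ, F i₀ = 0 → ∑ i, F (f i) = ∑ x, F x := by
    intro F hF
    have e1 : ∑ i, F (f i) = ∑ x : {i : X // i ≠ i₀}, F x :=
      Fintype.sum_equiv g _ _ (fun i => rfl)
    have e2 : ∑ x ∈ Finset.univ.erase i₀, F x = ∑ x : {i : X // i ≠ i₀}, F x :=
      Finset.sum_subtype _ (fun x => by simp [Finset.mem_erase]) F
    rw [e1, ← e2, Finset.sum_erase _ hF]
  set c : Fin (d+1) → ℝ := fun i => b (f i) with hc
  have hvm : Matrix.vecMul c (affMat p f) = 0 := by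
    funext j
    by_cases hj : (j:ℕ) < d
    · have : Matrix.vecMul c (affMat p f) j = ∑ i, b (f i) * p (f i) ⟨j, hj⟩ := by
        simp [Matrix.vecMul, dotProduct, affMat, hj, hc]
      rw [this, key (fun x => b x * p x ⟨j, hj⟩) (by simp [h0])]
      have := congrArg (fun v : EuclideanSpace ℝ (Fin d) => v ⟨j, hj⟩) h1
      rw [eucl_sum_apply] at this
      simpa [PiLp.smul_apply] using this
    · have : Matrix.vecMul c (affMat p f) j = ∑ i, b (f i) := by
        simp [Matrix.vecMul, dotProduct, affMat, hj, hc]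
      rw [this, key b h0]
      simpa using h2
  have hdet := det_affMat_ne_zero p hp f hf
  have hc0 : c = 0 := by
    have hU : IsUnit (affMat p f).det := isUnit_iff_ne_zero.mpr hdet
    have := congrArg (fun v => Matrix.vecMul v (affMat p f)⁻¹) hvm
    simpa [Matrix.vecMul_vecMul, Matrix.mul_nonsing_inv _ hU] using this
  funext x
  rcases eq_or_ne x i₀ with rfl | hx
  · simpa using h0
  · have : c (g.symm ⟨x, hx⟩) = 0 := congrFun hc0 _
    simpa [hc, hfdef] using this

/-- `d+2` generic points in `ℝ^d` have a unique (up to scaling) affine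
dependence, and all of its coefficients are nonzero. -/
theorem generic_points_affine_dependence {X : Type*} [Fintype X] {d : ℕ} (hd : 1 ≤ d)
    (hX : Fintype.card X = d + 2) (p : X → EuclideanSpace ℝ (Fin d))
    (hp : AlgebraicIndependent ℚ (fun xi : X × Fin d => p xi.1 xi.2)) :
    ∃ a : X → ℝ, a ≠ 0 ∧ (∑ i, a i • p i = 0) ∧ (∑ i, a i = 0) ∧
      (∀ i, a i ≠ 0) ∧
      ∀ b : X → ℝ, (∑ i, b i • p i = 0) → (∑ i, b i = 0) →
        ∃ c : ℝ, b = c • a := by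
  classical
  -- existence via dimension count
  set L : (X → ℝ) →ₗ[ℝ] (Fin d → ℝ) × ℝ :=
    { toFun := fun a => (fun j => ∑ i, a i * p i j, ∑ i, a i)
      map_add' := by
        intro x y
        refine Prod.ext (funext fun j => ?_) ?_ <;>
          simp [add_mul, Finset.sum_add_distrib]
      map_smul' := by
        intro c x
        refine Prod.ext (funext fun j => ?_) ?_ <;>
          simp [Finset.mul_sum, mul_assoc] } with hL
  have hninj : ¬ Function.Injective L := by
    intro h
    have := LinearMap.finrank_le_finrank_of_injective h
    rw [Module.finrank_prod, Module.finrank_fintype_fun_eq_card,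
        Module.finrank_fintype_fun_eq_card, Module.finrank_self, hX,
        Fintype.card_fin] at this
    omega
  have hker : LinearMap.ker L ≠ ⊥ := fun h => hninj (LinearMap.ker_eq_bot.mp h)
  obtain ⟨a, haker, ha0⟩ := Submodule.exists_mem_ne_zero_of_ne_bot hker
  have haL := LinearMap.mem_ker.mp haker
  have ha1 : ∑ i, a i • p i = 0 := by
    ext j
    have := congrFun (congrArg Prod.fst haL) j
    simp only [hL, LinearMap.coe_mk, AddHom.coe_mk] at this
    rw [eucl_sum_apply]
    simpa [PiLp.smul_apply] using this
  have ha2 : ∑ i, a i = 0 := congrArg Prod.snd haL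
  -- all coefficients nonzero
  have hanz : ∀ i, a i ≠ 0 := by
    intro i hi
    exact ha0 (vanish_aux hX p hp i a ha1 ha2 hi)
  refine ⟨a, ha0, ha1, ha2, hanz, ?_⟩
  intro b hb1 hb2
  have hXne : Nonempty X := by
    rw [← Fintype.card_pos_iff, hX]; omega
  obtain ⟨i₀⟩ := hXne
  refine ⟨b i₀ / a i₀, ?_⟩
  have hsub : b - (b i₀ / a i₀) • a = 0 := by
    apply vanish_aux hX p hp i₀
    · rw [show (∑ i, (b - (b i₀ / a i₀) • a) i • p i)
          = ∑ i, (b i • p i - (b i₀ / a i₀) • (a i • p i)) from by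
        refine Finset.sum_congr rfl fun i _ => ?_
        simp [sub_smul, smul_smul]]
      rw [Finset.sum_sub_distrib, ← Finset.smul_sum, hb1, ha1, smul_zero, sub_zero]
    · simp only [Pi.sub_apply, Pi.smul_apply, smul_eq_mul]
      rw [Finset.sum_sub_distrib, ← Finset.mul_sum, hb2, ha2, mul_zero, sub_zero]
    · simp [div_mul_cancel₀ _ (hanz i₀)]
  funext i
  have := congrFun hsub i
  simp only [Pi.sub_apply, Pi.zero_apply, sub_eq_zero] at this
  simpa using this
end
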